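/- Let $\mu, f, \psi, c, a, t_0$ be as before, with additionally $a'(t) > 0$ for all $t > t_0$. If equality holds in the conclusion $\frac{\int_{\{\psi<-t_0\}} a(-\psi) f\,d\mu}{\int_{\{\psi<-t_0\}} f\,d\mu} = \frac{\int_{t_0}^{+\infty} c(t)e^{-t}a(t)\,dt}{\int_{t_0}^{+\infty} c(t)e^{-t}\,dt}$, and the map $t \mapsto \int_{\{\psi<-t\}} f\,d\mu$ is right-continuous, then for every $t \ge t_0$: $\frac{\int_{\{\psi<-t\}} f\,d\mu}{\int_{\{\psi<-t_0\}} f\,d\mu} = \frac{\int_t^{+\infty} c(t_1)e^{-t_1}dt_1}{\int_{t_0}^{+\infty} c(t_1)e^{-t_1}dt_1}$. -/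

import Mathlib

open MeasureTheory Real Set Filter
open scoped ENNReal NNReal

lemma auxSwap {X' : Type*} [MeasurableSpace X'] (ν : Measure X') [IsFiniteMeasure ν]
    (t0 : ℝ) (φ : X' → ℝ) (hφ : Measurable φ) (w : ℝ → ℝ≥0∞) (hw : Measurable w) :
    ∫⁻ x, (∫⁻ s in Ioo t0 (φ x), w s) ∂ν
      = ∫⁻ s in Ioi t0, w s * ν {x | s < φ x} := by
  set S : Set (X' × ℝ) := {p | p.2 < φ p.1} with hS_def
  have hS : MeasurableSet S := measurableSet_lt measurable_snd (hφ.comp measurable_fst)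
  have hmeas : Measurable (S.indicator (fun p : X' × ℝ => w p.2)) :=
    (hw.comp measurable_snd).indicator hS
  calc ∫⁻ x, (∫⁻ s in Ioo t0 (φ x), w s) ∂ν
      = ∫⁻ x, (∫⁻ s in Ioi t0, S.indicator (fun p : X' × ℝ => w p.2) (x, s)) ∂ν := by
        refine lintegral_congr fun x => ?_
        have h1 : ∫⁻ s in Ioi t0, S.indicator (fun p : X' × ℝ => w p.2) (x, s)
            = ∫⁻ s in Ioi t0, (Iio (φ x)).indicator w s := by
          refine lintegral_congr fun s => ?_
          by_cases h : s < φ x <;> simp [Set.indicator, hS_def, h]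
        rw [h1, lintegral_indicator measurableSet_Iio, Measure.restrict_restrict measurableSet_Iio,
          Set.Iio_inter_Ioi]
    _ = ∫⁻ s in Ioi t0, (∫⁻ x, S.indicator (fun p : X' × ℝ => w p.2) (x, s) ∂ν) := by
        refine lintegral_lintegral_swap ?_
        refine (Measurable.aemeasurable ?_)
        have : (Function.uncurry fun x s => S.indicator (fun p : X' × ℝ => w p.2) (x, s))
            = S.indicator (fun p : X' × ℝ => w p.2) := by
          funext p; rfl
        rw [this]; exact hmeas
    _ = ∫⁻ s in Ioi t0, w s * ν {x | s < φ x} := by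
        refine lintegral_congr fun s => ?_
        have h1 : (fun x => S.indicator (fun p : X' × ℝ => w p.2) (x, s))
            = {x | s < φ x}.indicator (fun _ => w s) := by
          funext x
          by_cases h : s < φ x <;> simp [Set.indicator, hS_def, h]
        rw [h1, lintegral_indicator_const (measurableSet_lt measurable_const hφ)]

theorem stmt_5 (T : ℝ) {X : Type*} [MeasurableSpace X] (μ : Measure X)
    (f : X → ℝ) (hf_meas : Measurable f) (hf_nonneg : ∀ x, 0 ≤ f x)
    (ψ : X → ℝ) (hψ_meas : Measurable ψ) (hψ : ∀ x, ψ x < -T)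
    (c : ℝ → ℝ)
    (hc_cont : ContinuousOn c (Ioi T))
    (hc_pos : ∀ t ∈ Ioi T, 0 < c t)
    (hc_int : IntegrableOn (fun t => c t * exp (-t)) (Ioi T))
    (a a' : ℝ → ℝ)
    (ha_pos : ∀ t ∈ Ici T, 0 < a t)
    (ha_mono : MonotoneOn a (Ici T))
    (ha_cont : ContinuousOn a (Ici T))
    (ha_deriv : ∀ t ∈ Ioi T, HasDerivAt a (a' t) t)
    (ha'_cont : ContinuousOn a' (Ioi T))
    (hlim : Tendsto (fun t => a t * ∫ t1 in Ioi t, c t1 * exp (-t1)) atTop (nhds 0))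
    (t0 : ℝ) (ht0 : T ≤ t0)
    (hf_int : IntegrableOn f {y | ψ y < -t0} μ)
    (hf_pos : 0 < ∫ x in {y | ψ y < -t0}, f x ∂μ)
    (haf_int : IntegrableOn (fun x => a (-ψ x) * f x) {y | ψ y < -t0} μ)
    (hratio : ∀ t ≥ t0,
      (∫ t1 in Ioi t, c t1 * exp (-t1)) / (∫ t1 in Ioi t0, c t1 * exp (-t1)) ≤
        (∫ x in {y | ψ y < -t}, f x ∂μ) / (∫ x in {y | ψ y < -t0}, f x ∂μ))
    (ha'_pos : ∀ t > t0, 0 < a' t)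
    (heq : (∫ x in {y | ψ y < -t0}, a (-ψ x) * f x ∂μ) / (∫ x in {y | ψ y < -t0}, f x ∂μ) =
      (∫ t in Ioi t0, c t * exp (-t) * a t) / (∫ t in Ioi t0, c t * exp (-t)))
    (hrc : ∀ t ≥ t0, ContinuousWithinAt (fun s => ∫ x in {y | ψ y < -s}, f x ∂μ) (Ici t) t) :
    ∀ t ≥ t0,
      (∫ x in {y | ψ y < -t}, f x ∂μ) / (∫ x in {y | ψ y < -t0}, f x ∂μ) =
        (∫ t1 in Ioi t, c t1 * exp (-t1)) / (∫ t1 in Ioi t0, c t1 * exp (-t1)) := by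
  -- notation
  set F : ℝ → ℝ := fun t => ∫ x in {y | ψ y < -t}, f x ∂μ with hF_def
  set G : ℝ → ℝ := fun t => ∫ t1 in Ioi t, c t1 * exp (-t1) with hG_def
  set ce : ℝ → ℝ := fun t => c t * exp (-t) with hce_def
  -- basic measurability of the sets
  have h_meas_set : ∀ s : ℝ, MeasurableSet {y | ψ y < -s} := fun s =>
    measurableSet_lt hψ_meas measurable_const
  have hFsub : ∀ s ≥ t0, {y | ψ y < -s} ⊆ {y | ψ y < -t0} := fun s hs y hy =>
    lt_of_lt_of_le hy (neg_le_neg hs)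
  have hf_int_s : ∀ s ≥ t0, IntegrableOn f {y | ψ y < -s} μ := fun s hs =>
    hf_int.mono_set (hFsub s hs)
  have hF_nonneg : ∀ s, 0 ≤ F s := fun s =>
    setIntegral_nonneg (h_meas_set s) (fun x _ => hf_nonneg x)
  have hF_anti : AntitoneOn F (Ici t0) := by
    intro u hu v hv huv
    exact setIntegral_mono_set (hf_int_s u hu) (ae_of_all _ hf_nonneg)
      (HasSubset.Subset.eventuallyLE (fun y hy => lt_of_lt_of_le hy (neg_le_neg huv)))
  have hce_nonneg : ∀ t ∈ Ioi T, 0 ≤ ce t := fun t ht =>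
    mul_nonneg (hc_pos t ht).le (exp_pos _).le
  have hG_int : ∀ s, T ≤ s → IntegrableOn ce (Ioi s) := fun s hs =>
    hc_int.mono_set (Ioi_subset_Ioi hs)
  have hG_nonneg : ∀ s, T ≤ s → 0 ≤ G s := fun s hs =>
    setIntegral_nonneg measurableSet_Ioi (fun t ht => hce_nonneg t (lt_of_le_of_lt hs ht))
  have hce_nonneg_ae : ∀ s, T ≤ s → 0 ≤ᵐ[volume.restrict (Ioi s)] ce := by
    intro s hs
    exact (ae_restrict_iff' measurableSet_Ioi).2
      (ae_of_all _ (fun t ht => hce_nonneg t (lt_of_le_of_lt hs ht)))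
  have hGt0_pos : 0 < G t0 := by
    rw [hG_def]
    rw [setIntegral_pos_iff_support_of_nonneg_ae (hce_nonneg_ae t0 ht0) (hG_int t0 ht0)]
    have hsub : Ioi t0 ⊆ Function.support ce ∩ Ioi t0 := by
      intro t ht
      refine ⟨?_, ht⟩
      have := hce_nonneg t (lt_of_le_of_lt ht0 ht)
      have hpos : 0 < ce t := mul_pos (hc_pos t (lt_of_le_of_lt ht0 ht)) (exp_pos _)
      exact ne_of_gt hpos
    calc (0 : ℝ≥0∞) < volume (Ioi t0) := by simp
      _ ≤ volume (Function.support ce ∩ Ioi t0) := measure_mono hsub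
  have hG_anti : AntitoneOn G (Ici t0) := by
    intro u hu v hv huv
    exact setIntegral_mono_set (hG_int u (ht0.trans hu)) (hce_nonneg_ae u (ht0.trans hu))
      (HasSubset.Subset.eventuallyLE (Ioi_subset_Ioi huv))
  have hFt0_pos : 0 < F t0 := hf_pos
  -- measurable extensions
  set abar : ℝ → ℝ := fun t => a (max t T) with habar_def
  have habar_cont : Continuous abar :=
    ha_cont.comp_continuous (continuous_id.max continuous_const) (fun t => mem_Ici.2 (le_max_right _ _))
  have habar_eq : ∀ t, T ≤ t → abar t = a t := fun t ht => by
    rw [habar_def]; simp [max_eq_left ht]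
  set Fbar : ℝ → ℝ := fun s => F (max s t0) with hFbar_def
  have hFbar_anti : Antitone Fbar := by
    intro u v huv
    exact hF_anti (mem_Ici.2 (le_max_right _ _)) (mem_Ici.2 (le_max_right _ _))
      (max_le_max huv le_rfl)
  have hFbar_meas : Measurable Fbar := hFbar_anti.measurable
  have hFbar_eq : ∀ s, t0 ≤ s → Fbar s = F s := fun s hs => by
    rw [hFbar_def]; simp [max_eq_left hs]
  set Gbar : ℝ → ℝ := fun s => G (max s t0) with hGbar_def
  have hGbar_anti : Antitone Gbar := by
    intro u v huv
    exact hG_anti (mem_Ici.2 (le_max_right _ _)) (mem_Ici.2 (le_max_right _ _))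
      (max_le_max huv le_rfl)
  have hGbar_meas : Measurable Gbar := hGbar_anti.measurable
  have hGbar_eq : ∀ s, t0 ≤ s → Gbar s = G s := fun s hs => by
    rw [hGbar_def]; simp [max_eq_left hs]
  -- measurable version of a'
  have ha'_aem : AEMeasurable a' (volume.restrict (Ioi t0)) :=
    (ha'_cont.mono (Ioi_subset_Ioi ht0)).aemeasurable measurableSet_Ioi
  set a'' : ℝ → ℝ := ha'_aem.mk a' with ha''_def
  have ha''_meas : Measurable a'' := ha'_aem.measurable_mk
  have ha''_ae : a' =ᵐ[volume.restrict (Ioi t0)] a'' := ha'_aem.ae_eq_mk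
  set w : ℝ → ℝ≥0∞ := fun s => ENNReal.ofReal (a'' s) with hw_def
  have hw_meas : Measurable w := ENNReal.measurable_ofReal.comp ha''_meas
  -- FTC facts
  have L1 : ∀ b, t0 < b → IntegrableOn a' (Ioo t0 b) ∧ ∫ s in Ioo t0 b, a' s = a b - a t0 := by
    intro b hb
    have hcont : ContinuousOn a (Icc t0 b) := ha_cont.mono (fun x hx => ht0.trans hx.1)
    have hderiv : ∀ x ∈ Ioo t0 b, HasDerivAt a (a' x) x := fun x hx =>
      ha_deriv x (lt_of_le_of_lt ht0 hx.1)
    have hpos : ∀ x ∈ Ioo t0 b, 0 ≤ a' x := fun x hx => (ha'_pos x hx.1).le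
    have hInt : IntegrableOn a' (Ioc t0 b) :=
      intervalIntegral.integrableOn_deriv_of_nonneg hcont hderiv hpos
    have hFTC : ∫ s in t0..b, a' s = a b - a t0 :=
      intervalIntegral.integral_eq_sub_of_hasDeriv_right_of_le hb.le hcont
        (fun x hx => (hderiv x hx).hasDerivWithinAt)
        ((intervalIntegrable_iff_integrableOn_Ioc_of_le hb.le).2 hInt)
    constructor
    · exact hInt.mono_set Ioo_subset_Ioc_self
    · rw [← MeasureTheory.integral_Ioc_eq_integral_Ioo, ← intervalIntegral.integral_of_le hb.le]
      exact hFTC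
  have hFTClin : ∀ b, t0 < b → ∫⁻ s in Ioo t0 b, w s = ENNReal.ofReal (a b - a t0) := by
    intro b hb
    have h1 : ∫⁻ s in Ioo t0 b, w s = ∫⁻ s in Ioo t0 b, ENNReal.ofReal (a' s) := by
      refine lintegral_congr_ae ?_
      have h2 : a' =ᵐ[volume.restrict (Ioo t0 b)] a'' :=
        ae_restrict_of_ae_restrict_of_subset Ioo_subset_Ioi_self ha''_ae
      filter_upwards [h2] with s hs
      rw [hw_def]; simp [hs]
    rw [h1, ← ofReal_integral_eq_lintegral_ofReal (L1 b hb).1]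
    · rw [(L1 b hb).2]
    · exact (ae_restrict_iff' measurableSet_Ioo).2
        (ae_of_all _ (fun s hs => (ha'_pos s hs.1).le))
  -- the weighted measures
  set μ' : Measure X := μ.restrict {y | ψ y < -t0} with hμ'_def
  set ν : Measure X := μ'.withDensity (fun x => ENNReal.ofReal (f x)) with hν_def
  have hf_lint : ∫⁻ x, ENNReal.ofReal (f x) ∂μ' = ENNReal.ofReal (F t0) :=
    (ofReal_integral_eq_lintegral_ofReal hf_int (ae_of_all _ hf_nonneg)).symm
  have hν_fin : IsFiniteMeasure ν := by
    refine isFiniteMeasure_withDensity ?_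
    rw [hf_lint]; exact ENNReal.ofReal_ne_top
  have hν_apply : ∀ s, t0 ≤ s → ν {y | ψ y < -s} = ENNReal.ofReal (F s) := by
    intro s hs
    rw [hν_def, withDensity_apply _ (h_meas_set s), hμ'_def,
      Measure.restrict_restrict (h_meas_set s), inter_eq_left.2 (hFsub s hs),
      ← ofReal_integral_eq_lintegral_ofReal (hf_int_s s hs) (ae_of_all _ hf_nonneg)]
  have hν_ae : ∀ᵐ x ∂ν, t0 < -ψ x := by
    have h1 : ∀ᵐ x ∂μ', t0 < -ψ x := by
      filter_upwards [ae_restrict_mem (h_meas_set t0)] with x hx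
      simpa [lt_neg] using hx
    exact h1.filter_mono (withDensity_absolutelyContinuous μ' _).ae_le
  -- step A
  set A0 : ℝ := ∫ x in {y | ψ y < -t0}, (a (-ψ x) - a t0) * f x ∂μ with hA0_def
  have hA0_int : IntegrableOn (fun x => (a (-ψ x) - a t0) * f x) {y | ψ y < -t0} μ := by
    have : (fun x => (a (-ψ x) - a t0) * f x)
        = fun x => a (-ψ x) * f x - a t0 * f x := by funext x; ring
    rw [this]
    exact haf_int.sub (hf_int.const_mul (a t0))
  have hA0_nonneg_ae : 0 ≤ᵐ[μ'] fun x => (a (-ψ x) - a t0) * f x := by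
    rw [hμ'_def]
    refine (ae_restrict_iff' (h_meas_set t0)).2 (ae_of_all _ (fun x hx => ?_))
    have h1 : t0 ≤ -ψ x := le_of_lt (by simpa [lt_neg] using hx)
    have h2 : a t0 ≤ a (-ψ x) := ha_mono (mem_Ici.2 ht0) (mem_Ici.2 (ht0.trans h1)) h1
    exact mul_nonneg (by linarith) (hf_nonneg x)
  have hA0_nonneg : 0 ≤ A0 := by
    rw [hA0_def]
    exact integral_nonneg_of_ae hA0_nonneg_ae
  haveI := hν_fin
  have stepA : ENNReal.ofReal A0 = ∫⁻ s in Ioi t0, w s * ENNReal.ofReal (Fbar s) := by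
    have hswap := auxSwap ν t0 (fun x => -ψ x) hψ_meas.neg w hw_meas
    have hL : ∫⁻ x, (∫⁻ s in Ioo t0 (-ψ x), w s) ∂ν
        = ∫⁻ x, ENNReal.ofReal (abar (-ψ x) - a t0) ∂ν := by
      refine lintegral_congr_ae ?_
      filter_upwards [hν_ae] with x hx
      rw [hFTClin (-ψ x) hx, habar_eq (-ψ x) (le_of_lt (lt_of_le_of_lt ht0 hx))]
    have hwd : ∫⁻ x, ENNReal.ofReal (abar (-ψ x) - a t0) ∂ν = ENNReal.ofReal A0 := by
      have h2 : ∀ᵐ x ∂μ', ENNReal.ofReal (f x) * ENNReal.ofReal (abar (-ψ x) - a t0)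
          = ENNReal.ofReal ((a (-ψ x) - a t0) * f x) := by
        rw [hμ'_def]
        refine (ae_restrict_iff' (h_meas_set t0)).2 (ae_of_all _ (fun x hx => ?_))
        have h1 : t0 ≤ -ψ x := le_of_lt (by simpa [lt_neg] using hx)
        rw [habar_eq (-ψ x) (ht0.trans h1), mul_comm, ← ENNReal.ofReal_mul]
        have h3 : a t0 ≤ a (-ψ x) := ha_mono (mem_Ici.2 ht0) (mem_Ici.2 (ht0.trans h1)) h1
        linarith
      have hg1 : Measurable fun x : X => ENNReal.ofReal (abar (-ψ x) - a t0) :=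
        ((habar_cont.measurable.comp hψ_meas.neg).sub measurable_const).ennreal_ofReal
      rw [hν_def, lintegral_withDensity_eq_lintegral_mul₀'
        hf_meas.ennreal_ofReal.aemeasurable hg1.aemeasurable,
        ofReal_integral_eq_lintegral_ofReal hA0_int hA0_nonneg_ae]
      simp only [Pi.mul_apply]
      exact lintegral_congr_ae h2
    have hR : ∫⁻ s in Ioi t0, w s * ν {x | s < -ψ x}
        = ∫⁻ s in Ioi t0, w s * ENNReal.ofReal (Fbar s) := by
      refine setLIntegral_congr_fun measurableSet_Ioi (fun s hs => ?_)
      have : {x | s < -ψ x} = {y | ψ y < -s} := by ext x; simp [lt_neg]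
      rw [this, hν_apply s (le_of_lt hs), hFbar_eq s (le_of_lt hs)]
    rw [← hR, ← hswap, hL, hwd]
  -- the measure for step B
  have hce_int_t0 : IntegrableOn ce (Ioi t0) := hG_int t0 ht0
  have hce_aem : AEMeasurable ce (volume.restrict (Ioi t0)) := by
    have h1 : AEMeasurable c (volume.restrict (Ioi t0)) :=
      (hc_cont.mono (Ioi_subset_Ioi ht0)).aemeasurable measurableSet_Ioi
    exact h1.mul ((continuous_exp.comp continuous_neg).measurable).aemeasurable
  set ρ : Measure ℝ := (volume.restrict (Ioi t0)).withDensity (fun t => ENNReal.ofReal (ce t))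
    with hρ_def
  have hρ_fin : IsFiniteMeasure ρ := isFiniteMeasure_withDensity_ofReal hce_int_t0.hasFiniteIntegral
  haveI := hρ_fin
  have hρ_apply : ∀ s, t0 ≤ s → ρ (Ioi s) = ENNReal.ofReal (G s) := by
    intro s hs
    rw [hρ_def, withDensity_apply _ measurableSet_Ioi,
      Measure.restrict_restrict measurableSet_Ioi, inter_eq_left.2 (Ioi_subset_Ioi hs),
      ← ofReal_integral_eq_lintegral_ofReal (hG_int s (ht0.trans hs))
        (hce_nonneg_ae s (ht0.trans hs))]
  have hρ_ae : ∀ᵐ t ∂ρ, t0 < t := by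
    have h1 : ∀ᵐ t ∂(volume.restrict (Ioi t0)), t0 < t := ae_restrict_mem measurableSet_Ioi
    exact h1.filter_mono (withDensity_absolutelyContinuous _ _).ae_le
  set J : ℝ≥0∞ := ∫⁻ s in Ioi t0, w s * ENNReal.ofReal (Gbar s) with hJ_def
  have stepB : ∫⁻ t in Ioi t0, ENNReal.ofReal (ce t * (a t - a t0)) = J := by
    have hswap := auxSwap ρ t0 id measurable_id w hw_meas
    have hL : ∫⁻ t, (∫⁻ s in Ioo t0 (id t), w s) ∂ρ
        = ∫⁻ t, ENNReal.ofReal (abar t - a t0) ∂ρ := by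
      refine lintegral_congr_ae ?_
      filter_upwards [hρ_ae] with t ht
      rw [id, hFTClin t ht, habar_eq t (ht0.trans ht.le)]
    have hwd : ∫⁻ t, ENNReal.ofReal (abar t - a t0) ∂ρ
        = ∫⁻ t in Ioi t0, ENNReal.ofReal (ce t * (a t - a t0)) := by
      have hg2 : Measurable fun t : ℝ => ENNReal.ofReal (abar t - a t0) :=
        (habar_cont.measurable.sub measurable_const).ennreal_ofReal
      rw [hρ_def, lintegral_withDensity_eq_lintegral_mul₀'
        hce_aem.ennreal_ofReal hg2.aemeasurable]
      refine lintegral_congr_ae ?_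
      filter_upwards [ae_restrict_mem measurableSet_Ioi] with t ht
      simp only [Pi.mul_apply]
      rw [habar_eq t (ht0.trans ht.le), ← ENNReal.ofReal_mul (hce_nonneg t (lt_of_le_of_lt ht0 ht))]
    have hR : ∫⁻ s in Ioi t0, w s * ρ {x | s < id x} = J := by
      rw [hJ_def]
      refine setLIntegral_congr_fun measurableSet_Ioi (fun s hs => ?_)
      have : {x : ℝ | s < id x} = Ioi s := by ext x; simp [Ioi]
      rw [this, hρ_apply s hs.le, hGbar_eq s hs.le]
    rw [← hR, ← hswap, hL, hwd]
  -- ratio inequality, cross-multiplied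
  have hratio' : ∀ s, t0 ≤ s → G s * F t0 ≤ F s * G t0 := by
    intro s hs
    have := hratio s hs
    rwa [div_le_div_iff₀ hGt0_pos hFt0_pos] at this
  -- J is finite
  have hIneq : J * ENNReal.ofReal (F t0) ≤ ENNReal.ofReal A0 * ENNReal.ofReal (G t0) := by
    rw [hJ_def, stepA, ← lintegral_mul_const' _ _ ENNReal.ofReal_ne_top,
      ← lintegral_mul_const' _ _ ENNReal.ofReal_ne_top]
    refine lintegral_mono_ae ?_
    refine (ae_restrict_iff' measurableSet_Ioi).2 (ae_of_all _ (fun s hs => ?_))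
    show w s * ENNReal.ofReal (Gbar s) * ENNReal.ofReal (F t0)
      ≤ w s * ENNReal.ofReal (Fbar s) * ENNReal.ofReal (G t0)
    rw [hGbar_eq s hs.le, hFbar_eq s hs.le, mul_assoc, mul_assoc]
    refine mul_le_mul_right ?_ _
    rw [← ENNReal.ofReal_mul (hG_nonneg s (ht0.trans hs.le)),
      ← ENNReal.ofReal_mul (hF_nonneg s)]
    exact ENNReal.ofReal_le_ofReal (hratio' s hs.le)
  have hJ_fin : J ≠ ⊤ := by
    intro hJtop
    rw [hJtop, ENNReal.top_mul (by simpa using hFt0_pos : ENNReal.ofReal (F t0) ≠ 0)] at hIneq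
    exact (ENNReal.mul_ne_top ENNReal.ofReal_ne_top ENNReal.ofReal_ne_top) (top_le_iff.1 hIneq)
  -- integrability of ce * (a - a t0) on Ioi t0
  have hcea_aesm : AEStronglyMeasurable (fun t => ce t * (a t - a t0))
      (volume.restrict (Ioi t0)) := by
    have h1 : AEMeasurable (fun t => ce t * (abar t - a t0)) (volume.restrict (Ioi t0)) :=
      hce_aem.mul ((habar_cont.measurable.sub measurable_const)).aemeasurable
    refine (h1.congr ?_).aestronglyMeasurable
    filter_upwards [ae_restrict_mem measurableSet_Ioi] with t ht
    rw [habar_eq t (ht0.trans ht.le)]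
  have hcea_nonneg : 0 ≤ᵐ[volume.restrict (Ioi t0)] fun t => ce t * (a t - a t0) := by
    refine (ae_restrict_iff' measurableSet_Ioi).2 (ae_of_all _ (fun t ht => ?_))
    have h2 : a t0 ≤ a t := ha_mono (mem_Ici.2 ht0) (mem_Ici.2 (ht0.trans ht.le)) ht.le
    exact mul_nonneg (hce_nonneg t (lt_of_le_of_lt ht0 ht)) (by linarith)
  have hcea_int : IntegrableOn (fun t => ce t * (a t - a t0)) (Ioi t0) := by
    refine ⟨hcea_aesm, ?_⟩
    rw [hasFiniteIntegral_iff_ofReal hcea_nonneg, stepB]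
    exact hJ_fin.lt_top
  set B0 : ℝ := ∫ t in Ioi t0, ce t * (a t - a t0) with hB0_def
  have hB0_nonneg : 0 ≤ B0 := integral_nonneg_of_ae hcea_nonneg
  have hB0J : ENNReal.ofReal B0 = J := by
    rw [hB0_def, ofReal_integral_eq_lintegral_ofReal hcea_int hcea_nonneg, stepB]
  -- split the equality hypothesis
  have hA_split : ∫ x in {y | ψ y < -t0}, a (-ψ x) * f x ∂μ = A0 + a t0 * F t0 := by
    have h1 : A0 = (∫ x in {y | ψ y < -t0}, a (-ψ x) * f x ∂μ)
        - ∫ x in {y | ψ y < -t0}, a t0 * f x ∂μ := by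
      rw [hA0_def, ← integral_sub haf_int (hf_int.const_mul (a t0))]
      congr 1; funext x; ring
    have h2 : ∫ x in {y | ψ y < -t0}, a t0 * f x ∂μ = a t0 * F t0 := by
      rw [integral_const_mul]
    rw [h2] at h1; linarith
  have hcea_int2 : IntegrableOn (fun t => ce t * a t) (Ioi t0) := by
    have h1 : (fun t => ce t * a t) = fun t => ce t * (a t - a t0) + ce t * a t0 := by
      funext t; ring
    rw [h1]
    exact hcea_int.add (hce_int_t0.mul_const (a t0))
  have hB_split : ∫ t in Ioi t0, c t * exp (-t) * a t = B0 + a t0 * G t0 := by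
    have h0 : ∫ t in Ioi t0, c t * exp (-t) * a t = ∫ t in Ioi t0, ce t * a t := rfl
    have h1 : ∫ t in Ioi t0, ce t * a t
        = (∫ t in Ioi t0, ce t * (a t - a t0)) + ∫ t in Ioi t0, ce t * a t0 := by
      rw [← integral_add hcea_int (hce_int_t0.mul_const (a t0))]
      congr 1; funext t; ring
    have h2 : ∫ t in Ioi t0, ce t * a t0 = a t0 * G t0 := by
      rw [integral_mul_const, hG_def, mul_comm]
    rw [h0, h1, h2, ← hB0_def]
  -- cross-multiplied equality
  have hkey : A0 * G t0 = B0 * F t0 := by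
    rw [hA_split, hB_split] at heq
    rw [div_eq_div_iff (ne_of_gt hFt0_pos) (ne_of_gt hGt0_pos)] at heq
    linear_combination heq
  -- equality of the lintegrals
  have hlin_eq : ∫⁻ s in Ioi t0, w s * ENNReal.ofReal (Fbar s) * ENNReal.ofReal (G t0)
      = ∫⁻ s in Ioi t0, w s * ENNReal.ofReal (Gbar s) * ENNReal.ofReal (F t0) := by
    rw [lintegral_mul_const' _ _ ENNReal.ofReal_ne_top,
      lintegral_mul_const' _ _ ENNReal.ofReal_ne_top, ← stepA, ← hJ_def, ← hB0J,
      ← ENNReal.ofReal_mul hA0_nonneg, ← ENNReal.ofReal_mul hB0_nonneg, hkey]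
  -- derive a.e. equality
  have hu_meas : Measurable (fun s => w s * ENNReal.ofReal (Gbar s) * ENNReal.ofReal (F t0)) :=
    ((hw_meas.mul (ENNReal.measurable_ofReal.comp hGbar_meas)).mul_const _)
  have hv_meas : Measurable (fun s => w s * ENNReal.ofReal (Fbar s) * ENNReal.ofReal (F t0)) :=
    ((hw_meas.mul (ENNReal.measurable_ofReal.comp hFbar_meas)).mul_const _)
  have hu_le : (fun s => w s * ENNReal.ofReal (Gbar s) * ENNReal.ofReal (F t0))
      ≤ᵐ[volume.restrict (Ioi t0)]
      (fun s => w s * ENNReal.ofReal (Fbar s) * ENNReal.ofReal (G t0)) := by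
    refine (ae_restrict_iff' measurableSet_Ioi).2 (ae_of_all _ (fun s hs => ?_))
    show w s * ENNReal.ofReal (Gbar s) * ENNReal.ofReal (F t0)
      ≤ w s * ENNReal.ofReal (Fbar s) * ENNReal.ofReal (G t0)
    rw [hGbar_eq s hs.le, hFbar_eq s hs.le, mul_assoc, mul_assoc]
    refine mul_le_mul_right ?_ _
    rw [← ENNReal.ofReal_mul (hG_nonneg s (ht0.trans hs.le)),
      ← ENNReal.ofReal_mul (hF_nonneg s)]
    exact ENNReal.ofReal_le_ofReal (hratio' s hs.le)
  have hu_fin : ∫⁻ s in Ioi t0, w s * ENNReal.ofReal (Gbar s) * ENNReal.ofReal (F t0) ≠ ⊤ := by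
    rw [lintegral_mul_const' _ _ ENNReal.ofReal_ne_top, ← hJ_def]
    exact ENNReal.mul_ne_top hJ_fin ENNReal.ofReal_ne_top
  have hsub_zero : ∫⁻ s in Ioi t0,
      (w s * ENNReal.ofReal (Fbar s) * ENNReal.ofReal (G t0)
        - w s * ENNReal.ofReal (Gbar s) * ENNReal.ofReal (F t0)) = 0 := by
    rw [lintegral_sub hu_meas hu_fin hu_le, hlin_eq, tsub_self]
  have hae0 : ∀ᵐ s ∂(volume.restrict (Ioi t0)),
      w s * ENNReal.ofReal (Fbar s) * ENNReal.ofReal (G t0)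
        - w s * ENNReal.ofReal (Gbar s) * ENNReal.ofReal (F t0) = 0 := by
    have hmeas : Measurable (fun s => w s * ENNReal.ofReal (Fbar s) * ENNReal.ofReal (G t0)
        - w s * ENNReal.ofReal (Gbar s) * ENNReal.ofReal (F t0)) :=
      ((hw_meas.mul (ENNReal.measurable_ofReal.comp hFbar_meas)).mul_const _).sub
        ((hw_meas.mul (ENNReal.measurable_ofReal.comp hGbar_meas)).mul_const _)
    exact (lintegral_eq_zero_iff hmeas).1 hsub_zero
  have hae : ∀ᵐ s ∂(volume.restrict (Ioi t0)), G s * F t0 = F s * G t0 := by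
    filter_upwards [hae0, hu_le, ha''_ae.symm, ae_restrict_mem measurableSet_Ioi]
      with s h0 hle ha's hs
    have heqw : w s * ENNReal.ofReal (Fbar s) * ENNReal.ofReal (G t0)
        = w s * ENNReal.ofReal (Gbar s) * ENNReal.ofReal (F t0) := by
      have h1 := tsub_eq_zero_iff_le.1 h0
      exact le_antisymm h1 hle
    have hw_pos : w s ≠ 0 := by
      rw [hw_def]
      simp only [ne_eq, ENNReal.ofReal_eq_zero, not_le]
      rw [ha's]
      exact ha'_pos s hs
    rw [mul_assoc, mul_assoc] at heqw
    have h2 := (ENNReal.mul_right_inj hw_pos ENNReal.ofReal_ne_top).1 heqw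
    rw [hFbar_eq s hs.le, hGbar_eq s hs.le,
      ← ENNReal.ofReal_mul (hF_nonneg s),
      ← ENNReal.ofReal_mul (hG_nonneg s (ht0.trans hs.le))] at h2
    have h3 := (ENNReal.ofReal_eq_ofReal_iff
      (mul_nonneg (hF_nonneg s) (hG_nonneg t0 ht0))
      (mul_nonneg (hG_nonneg s (ht0.trans hs.le)) (hF_nonneg t0))).1 h2
    linarith
  -- conclusion
  intro t ht
  rw [div_eq_div_iff (ne_of_gt hFt0_pos) (ne_of_gt hGt0_pos)]
  -- continuity of G from the right at t
  have hGc : ContinuousWithinAt G (Ici t) t := by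
    have hint : IntegrableOn ce (Icc t (t + 1)) := by
      rw [integrableOn_Icc_iff_integrableOn_Ioc]
      exact hc_int.mono_set (fun x hx => lt_of_le_of_lt (ht0.trans ht) hx.1)
    have hH := intervalIntegral.continuousOn_primitive hint
    have hHt : ContinuousWithinAt (fun x => ∫ u in Ioc t x, ce u) (Ici t) t := by
      have h1 := hH t (mem_Icc.2 ⟨le_rfl, by linarith⟩)
      refine h1.mono_of_mem_nhdsWithin ?_
      rw [← Ici_inter_Iic]
      exact inter_mem self_mem_nhdsWithin
        (mem_nhdsWithin_of_mem_nhds (Iic_mem_nhds (by linarith)))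
    have hsplit : ∀ s ∈ Ici t, G s = G t - ∫ u in Ioc t s, ce u := by
      intro s hs
      have h1 : G t = (∫ u in Ioc t s, ce u) + G s := by
        show (∫ u in Ioi t, ce u) = (∫ u in Ioc t s, ce u) + ∫ u in Ioi s, ce u
        have h2 : Ioc t s ∪ Ioi s = Ioi t := Ioc_union_Ioi_eq_Ioi hs
        rw [← h2, setIntegral_union (Set.Ioc_disjoint_Ioi le_rfl) measurableSet_Ioi
          (hc_int.mono_set (fun x hx => lt_of_le_of_lt (ht0.trans ht) hx.1))
          (hG_int s (ht0.trans (le_trans ht hs)))]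
      linarith
    refine (continuousWithinAt_const.sub hHt).congr hsplit ?_
    simp [hG_def]
    rfl
  have hFc : ContinuousWithinAt F (Ici t) t := hrc t ht
  have hfreq : ∃ᶠ s in nhdsWithin t (Ioi t), G s * F t0 = F s * G t0 := by
    by_contra hcon
    rw [Filter.not_frequently] at hcon
    obtain ⟨u, hu, hsub⟩ := mem_nhdsGT_iff_exists_Ioo_subset.1 hcon
    have hnull : volume ({s | ¬ (G s * F t0 = F s * G t0)} ∩ Ioi t0) = 0 := by
      have h1 := hae
      rw [ae_iff] at h1
      rwa [Measure.restrict_apply' measurableSet_Ioi] at h1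
    have hsub2 : Ioo t u ⊆ {s | ¬ (G s * F t0 = F s * G t0)} ∩ Ioi t0 := fun s hs =>
      ⟨hsub hs, lt_of_le_of_lt ht hs.1⟩
    have h2 : volume (Ioo t u) = 0 := measure_mono_null hsub2 hnull
    rw [Real.volume_Ioo] at h2
    rw [ENNReal.ofReal_eq_zero] at h2
    have : t < u := hu
    linarith
  have h1 : Tendsto (fun s => G s * F t0) (nhdsWithin t (Ioi t)) (nhds (G t * F t0)) :=
    ((hGc.mono Ioi_subset_Ici_self).tendsto).mul_const _
  have h2 : Tendsto (fun s => F s * G t0) (nhdsWithin t (Ioi t)) (nhds (F t * G t0)) :=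
    ((hFc.mono Ioi_subset_Ici_self).tendsto).mul_const _
  haveI : (nhdsWithin t (Ioi t)).NeBot := nhdsGT_neBot t
  have h3 := tendsto_nhds_unique_of_frequently_eq h1 h2 hfreq
  linarith
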